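/- arXiv:1406.4297 — 2 statements merged into one kernel-verified Lean document; each statement's English description precedes it below -/
import Mathlib

section
/- Let v : I₁ × I₂ → ℝ be continuous, satisfy v(x,y) ≥ −y, be nonincreasing in x, and such that y ↦ v(x,y) + y is nondecreasing in y for each x. Define y*(x) := inf{y ∈ I₂ : v(x,y) > −y} (with inf ∅ := sup I₂). Then y* : I₁ → closure(I₂) is nondecreasing and right-continuous. -/
open Set Filter

/-- The optimal stopping boundary `y*(x) = inf {y ∈ I₂ : v(x,y) > -y}`
(with the convention `inf ∅ = sup I₂`), as an extended-real-valued function. -/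
noncomputable def ystarBoundary (I₂ : Set ℝ) (v : ℝ → ℝ → ℝ) (x : ℝ) : EReal :=
  open Classical in
  if ({y | y ∈ I₂ ∧ -y < v x y}).Nonempty then
    sInf ((fun y : ℝ => (y : EReal)) '' {y | y ∈ I₂ ∧ -y < v x y})
  else sSup ((fun y : ℝ => (y : EReal)) '' I₂)

/-- The boundary `y*` takes values in the closure of `I₂`, is nondecreasing and
right-continuous on `I₁`. -/
theorem ystar_monotone_rightContinuous
    (I₁ I₂ : Set ℝ) (hI₁o : IsOpen I₁) (hI₁c : I₁.OrdConnected)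
    (hI₂o : IsOpen I₂) (hI₂c : I₂.OrdConnected) (hI₂ne : I₂.Nonempty)
    (v : ℝ → ℝ → ℝ)
    (hcont : ContinuousOn (fun p : ℝ × ℝ => v p.1 p.2) (I₁ ×ˢ I₂))
    (hbd : ∀ x ∈ I₁, ∀ y ∈ I₂, -y ≤ v x y)
    (hx_anti : ∀ y ∈ I₂, AntitoneOn (fun x => v x y) I₁)
    (hmono : ∀ x ∈ I₁, MonotoneOn (fun y => v x y + y) I₂) :
    (∀ x ∈ I₁, ystarBoundary I₂ v x ∈ closure ((fun y : ℝ => (y : EReal)) '' I₂)) ∧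
    MonotoneOn (ystarBoundary I₂ v) I₁ ∧
    (∀ x ∈ I₁, Tendsto (ystarBoundary I₂ v) (nhdsWithin x (I₁ ∩ Ioi x))
      (nhds (ystarBoundary I₂ v x))) := by
  classical
  set e : ℝ → EReal := fun y => (y : EReal) with he
  have hSanti : ∀ x₁ ∈ I₁, ∀ x₂ ∈ I₁, x₁ ≤ x₂ →
      {y | y ∈ I₂ ∧ -y < v x₂ y} ⊆ {y | y ∈ I₂ ∧ -y < v x₁ y} := by
    intro x₁ h₁ x₂ h₂ hle y hy
    exact ⟨hy.1, lt_of_lt_of_le hy.2 (hx_anti y hy.1 h₁ h₂ hle)⟩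
  have hmem : ∀ x ∈ I₁, ystarBoundary I₂ v x ∈ closure (e '' I₂) := by
    intro x hx
    unfold ystarBoundary
    split_ifs with h
    · refine closure_mono
        (image_mono (f := e) (show {y | y ∈ I₂ ∧ -y < v x y} ⊆ I₂ from fun y hy => hy.1)) ?_
      exact csInf_mem_closure (h.image e) (OrderBot.bddBelow _)
    · exact csSup_mem_closure (hI₂ne.image e) (OrderTop.bddAbove _)
  have hmono' : MonotoneOn (ystarBoundary I₂ v) I₁ := by
    intro x₁ h₁ x₂ h₂ hle
    have hsub := hSanti x₁ h₁ x₂ h₂ hle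
    unfold ystarBoundary
    split_ifs with ha hb hb
    · exact sInf_le_sInf (image_mono (f := e) hsub)
    · obtain ⟨y, hy⟩ := ha
      calc sInf (e '' {y | y ∈ I₂ ∧ -y < v x₁ y}) ≤ e y := sInf_le ⟨y, hy, rfl⟩
        _ ≤ sSup (e '' I₂) := le_sSup ⟨y, hy.1, rfl⟩
    · exact absurd (hb.mono hsub) ha
    · exact le_rfl
  refine ⟨hmem, hmono', ?_⟩
  intro x hx
  by_cases h : ({y | y ∈ I₂ ∧ -y < v x y}).Nonempty
  · rw [tendsto_order]
    constructor
    · intro a ha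
      filter_upwards [self_mem_nhdsWithin] with x' hx'
      exact lt_of_lt_of_le ha (hmono' hx hx'.1 (le_of_lt hx'.2))
    · intro b hb
      have hx_eq : ystarBoundary I₂ v x = sInf (e '' {y | y ∈ I₂ ∧ -y < v x y}) := if_pos h
      rw [hx_eq] at hb
      obtain ⟨z, hz, hzb⟩ := exists_lt_of_csInf_lt ((h.image e)) hb
      obtain ⟨y, hy, rfl⟩ := hz
      -- continuity of v in x at (x, y)
      have hca : ContinuousAt (fun p : ℝ × ℝ => v p.1 p.2) (x, y) :=
        hcont.continuousAt ((hI₁o.prod hI₂o).mem_nhds ⟨hx, hy.1⟩)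
      have hg : ContinuousAt (fun x' : ℝ => ((x', y) : ℝ × ℝ)) x :=
        continuousAt_id.prodMk continuousAt_const
      have hcax : Tendsto (fun x' : ℝ => v x' y) (nhds x) (nhds (v x y)) :=
        Filter.Tendsto.comp hca hg
      have hev : ∀ᶠ x' in nhds x, -y < v x' y := hcax (Ioi_mem_nhds hy.2)
      filter_upwards [self_mem_nhdsWithin, eventually_nhdsWithin_of_eventually_nhds hev]
        with x' hx' hvy
      have hySx' : y ∈ {y | y ∈ I₂ ∧ -y < v x' y} := ⟨hy.1, hvy⟩
      have : ystarBoundary I₂ v x' = sInf (e '' {y | y ∈ I₂ ∧ -y < v x' y}) :=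
        if_pos ⟨y, hySx'⟩
      rw [this]
      exact lt_of_le_of_lt (sInf_le ⟨y, hySx', rfl⟩) hzb
  · have hconst : ∀ᶠ x' in nhdsWithin x (I₁ ∩ Ioi x),
        ystarBoundary I₂ v x' = ystarBoundary I₂ v x := by
      filter_upwards [self_mem_nhdsWithin] with x' hx'
      have hsub := hSanti x hx x' hx'.1 (le_of_lt hx'.2)
      have hempty : ¬ ({y | y ∈ I₂ ∧ -y < v x' y}).Nonempty := fun hne => h (hne.mono hsub)
      simp only [ystarBoundary, if_neg h, if_neg hempty]
    have hconst' : (fun _ => ystarBoundary I₂ v x) =ᶠ[nhdsWithin x (I₁ ∩ Ioi x)]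
        ystarBoundary I₂ v := hconst.mono fun x' hx' => hx'.symm
    exact tendsto_const_nhds.congr' hconst'
end

section
/- With v continuous on I₁ × I₂ × ℝ₊, nondecreasing in z, nonincreasing in x, v(x,y;z) ≥ −y, and y ↦ v(x,y;z)+y nondecreasing, define z*(x,y) := inf{z ∈ ℝ₊ : v(x,y;z) > −y}. Then: (a) x ↦ z*(x,y) is nondecreasing and right-continuous for each y; (b) y ↦ z*(x,y) is nonincreasing and left-continuous for each x; (c) (x,y) ↦ z*(x,y) is upper-semicontinuous. -/
open Set Filter Topology

/-- The free boundary of the control problem,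
`z*(x,y) = inf {z ≥ 0 : v(x,y;z) > -y}`, with the convention `inf ∅ = +∞`. -/
noncomputable def zstarFam (v : ℝ → ℝ → ℝ → ℝ) (x y : ℝ) : EReal :=
  sInf ((fun z : ℝ => (z : EReal)) '' {z | 0 ≤ z ∧ -y < v x y z})

lemma zstar_nonneg (v : ℝ → ℝ → ℝ → ℝ) (x y : ℝ) : (0 : EReal) ≤ zstarFam v x y := by
  apply le_sInf
  rintro w ⟨z, ⟨hz, _⟩, rfl⟩
  exact EReal.coe_nonneg.mpr hz

lemma zstar_le (v : ℝ → ℝ → ℝ → ℝ) {x y z : ℝ} (hz : 0 ≤ z) (hv : -y < v x y z) :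
    zstarFam v x y ≤ (z : EReal) :=
  sInf_le ⟨z, ⟨hz, hv⟩, rfl⟩

lemma zstar_lt_iff (v : ℝ → ℝ → ℝ → ℝ) {x y : ℝ}
    (hcz : ContinuousOn (fun z => v x y z) (Ici 0))
    (hmz : MonotoneOn (fun z => v x y z) (Ici 0)) (z : ℝ) :
    zstarFam v x y < (z : EReal) ↔ 0 < z ∧ -y < v x y z := by
  constructor
  · intro h
    obtain ⟨w, hw, hwz⟩ := sInf_lt_iff.mp h
    obtain ⟨t, ⟨ht0, htv⟩, rfl⟩ := hw
    have htz : t < z := EReal.coe_lt_coe_iff.mp hwz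
    refine ⟨lt_of_le_of_lt ht0 htz, lt_of_lt_of_le htv ?_⟩
    exact hmz ht0 (le_trans ht0 htz.le) htz.le
  · rintro ⟨hz0, hv⟩
    have hca : ContinuousAt (fun z => v x y z) z :=
      hcz.continuousAt (Ici_mem_nhds hz0)
    have h1 : ∀ᶠ t in 𝓝 z, -y < v x y t := hca.eventually (eventually_gt_nhds hv)
    have h2 : ∀ᶠ t in 𝓝 z, 0 < t := eventually_gt_nhds hz0
    have h3 : ∀ᶠ t in 𝓝[<] z, (-y < v x y t ∧ 0 < t) ∧ t < z :=
      (((h1.and h2).filter_mono nhdsWithin_le_nhds).and eventually_mem_nhdsWithin)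
    obtain ⟨t, ⟨htv, ht0⟩, htz⟩ := h3.exists
    exact lt_of_le_of_lt (zstar_le v ht0.le htv) (by exact_mod_cast htz)

/-- `z*` is nondecreasing and right-continuous in `x`, nonincreasing and left-continuous
in `y`, and jointly upper-semicontinuous. -/
theorem zstar_monotone_semicontinuous
    (I₁ I₂ : Set ℝ) (hI₁o : IsOpen I₁) (hI₁c : I₁.OrdConnected)
    (hI₂o : IsOpen I₂) (hI₂c : I₂.OrdConnected)
    (v : ℝ → ℝ → ℝ → ℝ)
    (hcont : ContinuousOn (fun p : ℝ × ℝ × ℝ => v p.1 p.2.1 p.2.2) (I₁ ×ˢ I₂ ×ˢ Ici 0))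
    (hz_mono : ∀ x ∈ I₁, ∀ y ∈ I₂, MonotoneOn (fun z => v x y z) (Ici 0))
    (hx_anti : ∀ y ∈ I₂, ∀ z ≥ (0 : ℝ), AntitoneOn (fun x => v x y z) I₁)
    (hbd : ∀ x ∈ I₁, ∀ y ∈ I₂, ∀ z ≥ (0 : ℝ), -y ≤ v x y z)
    (hy_mono : ∀ x ∈ I₁, ∀ z ≥ (0 : ℝ), MonotoneOn (fun y => v x y z + y) I₂) :
    (∀ y ∈ I₂, MonotoneOn (fun x => zstarFam v x y) I₁) ∧
    (∀ y ∈ I₂, ∀ x ∈ I₁, Tendsto (fun x' => zstarFam v x' y)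
      (nhdsWithin x (I₁ ∩ Ioi x)) (nhds (zstarFam v x y))) ∧
    (∀ x ∈ I₁, AntitoneOn (fun y => zstarFam v x y) I₂) ∧
    (∀ x ∈ I₁, ∀ y ∈ I₂, Tendsto (fun y' => zstarFam v x y')
      (nhdsWithin y (I₂ ∩ Iio y)) (nhds (zstarFam v x y))) ∧
    UpperSemicontinuousOn (fun p : ℝ × ℝ => zstarFam v p.1 p.2) (I₁ ×ˢ I₂) := by
  -- continuity in z for fixed (x,y)
  have hcz : ∀ x ∈ I₁, ∀ y ∈ I₂, ContinuousOn (fun z => v x y z) (Ici 0) := by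
    intro x hx y hy
    have hmap : Continuous (fun z : ℝ => ((x, y, z) : ℝ × ℝ × ℝ)) := by continuity
    exact hcont.comp hmap.continuousOn (fun t ht => ⟨hx, hy, ht⟩)
  -- continuity in x for fixed (y,z)
  have hcx : ∀ y ∈ I₂, ∀ z ≥ (0:ℝ), ContinuousOn (fun x => v x y z) I₁ := by
    intro y hy z hz
    have hmap : Continuous (fun x : ℝ => ((x, y, z) : ℝ × ℝ × ℝ)) := by continuity
    exact hcont.comp hmap.continuousOn (fun t ht => ⟨ht, hy, hz⟩)
  -- continuity in y for fixed (x,z)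
  have hcy : ∀ x ∈ I₁, ∀ z ≥ (0:ℝ), ContinuousOn (fun y => v x y z) I₂ := by
    intro x hx z hz
    have hmap : Continuous (fun y : ℝ => ((x, y, z) : ℝ × ℝ × ℝ)) := by continuity
    exact hcont.comp hmap.continuousOn (fun t ht => ⟨hx, ht, hz⟩)
  -- joint continuity in (x,y) for fixed z
  have hcxy : ∀ z ≥ (0:ℝ), ContinuousOn (fun p : ℝ × ℝ => v p.1 p.2 z) (I₁ ×ˢ I₂) := by
    intro z hz
    have hmap : Continuous (fun p : ℝ × ℝ => ((p.1, p.2, z) : ℝ × ℝ × ℝ)) := by continuity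
    exact hcont.comp hmap.continuousOn (fun p hp => ⟨hp.1, hp.2, hz⟩)
  -- monotone in x
  have hmono : ∀ y ∈ I₂, MonotoneOn (fun x => zstarFam v x y) I₁ := by
    intro y hy x hx x' hx' hxx'
    apply sInf_le_sInf
    apply image_mono
    rintro z ⟨hz0, hzv⟩
    exact ⟨hz0, lt_of_lt_of_le hzv (hx_anti y hy z hz0 hx hx' hxx')⟩
  -- antitone in y
  have hanti : ∀ x ∈ I₁, AntitoneOn (fun y => zstarFam v x y) I₂ := by
    intro x hx y hy y' hy' hyy'
    apply sInf_le_sInf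
    apply image_mono
    rintro z ⟨hz0, hzv⟩
    refine ⟨hz0, ?_⟩
    have := hy_mono x hx z hz0 hy hy' hyy'
    simp only at this
    linarith
  refine ⟨hmono, ?_, hanti, ?_, ?_⟩
  · -- right continuity in x
    intro y hy x hx
    rw [tendsto_order]
    constructor
    · intro a ha
      filter_upwards [self_mem_nhdsWithin] with x' hx'
      exact lt_of_lt_of_le ha (hmono y hy hx hx'.1 hx'.2.le)
    · intro b hb
      obtain ⟨z, hz1, hz2⟩ := EReal.lt_iff_exists_real_btwn.mp hb
      obtain ⟨hz0, hzv⟩ := (zstar_lt_iff v (hcz x hx y hy) (hz_mono x hx y hy) z).mp hz1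
      have hca : ContinuousAt (fun x => v x y z) x :=
        (hcx y hy z hz0.le).continuousAt (hI₁o.mem_nhds hx)
      have h1 : ∀ᶠ x' in 𝓝 x, -y < v x' y z := hca.eventually (eventually_gt_nhds hzv)
      filter_upwards [h1.filter_mono nhdsWithin_le_nhds] with x' hx'
      exact lt_of_le_of_lt (zstar_le v hz0.le hx') hz2
  · -- left continuity in y
    intro x hx y hy
    rw [tendsto_order]
    constructor
    · intro a ha
      filter_upwards [self_mem_nhdsWithin] with y' hy'
      exact lt_of_lt_of_le ha (hanti x hx hy'.1 hy hy'.2.le)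
    · intro b hb
      obtain ⟨z, hz1, hz2⟩ := EReal.lt_iff_exists_real_btwn.mp hb
      obtain ⟨hz0, hzv⟩ := (zstar_lt_iff v (hcz x hx y hy) (hz_mono x hx y hy) z).mp hz1
      have hca : ContinuousAt (fun y' => v x y' z + y') y := by
        have := ((hcy x hx z hz0.le).continuousAt (hI₂o.mem_nhds hy))
        exact this.add continuousAt_id
      have hpos : (0:ℝ) < v x y z + y := by linarith
      have h1 : ∀ᶠ y' in 𝓝 y, 0 < v x y' z + y' := hca.eventually (eventually_gt_nhds hpos)
      filter_upwards [h1.filter_mono nhdsWithin_le_nhds] with y' hy'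
      exact lt_of_le_of_lt (zstar_le v hz0.le (by linarith)) hz2
  · -- upper semicontinuity
    intro p hp c hc
    obtain ⟨z, hz1, hz2⟩ := EReal.lt_iff_exists_real_btwn.mp hc
    obtain ⟨hz0, hzv⟩ :=
      (zstar_lt_iff v (hcz p.1 hp.1 p.2 hp.2) (hz_mono p.1 hp.1 p.2 hp.2) z).mp hz1
    have hca : ContinuousAt (fun q : ℝ × ℝ => v q.1 q.2 z + q.2) p := by
      have := (hcxy z hz0.le).continuousAt ((hI₁o.prod hI₂o).mem_nhds hp)
      exact this.add (continuous_snd.continuousAt)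
    have hpos : (0:ℝ) < v p.1 p.2 z + p.2 := by linarith
    have h1 : ∀ᶠ q in 𝓝 p, 0 < v q.1 q.2 z + q.2 := hca.eventually (eventually_gt_nhds hpos)
    filter_upwards [h1.filter_mono nhdsWithin_le_nhds] with q hq
    exact lt_of_le_of_lt (zstar_le v hz0.le (by linarith)) hz2
end
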